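/- Let ℓ ∈ ℂ, η ∈ ℂ, d ≥ 1, μ ∈ ℕ, a : X → ℝ with a(x) ≥ 1, and let ξ_k : X → ℂ (k ∈ ℕ) be functions with Σ_k sup_{x} |ξ_k(x)| < ∞. Fix s ∈ ℂ with Re(ℓs + η) + d < 0 and where ℓs + η + d − k ≠ 0 for all k ∈ ℕ. Then the function y ↦ y^{(ℓs+η)/d}(log y)^μ Σ_k ξ_k(x)(a(x)/y)^{k/d} is integrable on (a(x), ∞) for every x, and its integral equals −a(x)^{(ℓs+η+d)/d} Σ_{i=0}^{μ} c_{μ,i} (log a(x))^i Σ_k ξ_k(x)/(ℓs+η+d−k)^{μ+1−i}, with c_{μ,i} = (−1)^{μ−i}(μ!/i!)d^{μ+1−i}. -/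

import Mathlib

open MeasureTheory

open Filter Set


lemma hasDerivAt_creal_cpow {y : ℝ} (hy : 0 < y) (z : ℂ) :
    HasDerivAt (fun t : ℝ => (t : ℂ) ^ z) (z * (y : ℂ) ^ (z - 1)) y := by
  rcases eq_or_ne z 0 with rfl | hz
  · simpa using (hasDerivAt_const y (1 : ℂ))
  · have hr : z - 1 ≠ -1 := by
      intro h; apply hz; linear_combination h
    have h := hasDerivAt_ofReal_cpow_const' (ne_of_gt hy) hr
    simp only [sub_add_cancel] at h
    have h2 := h.const_mul z
    exact h2.congr_of_eventuallyEq (Eventually.of_forall fun t => by field_simp)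

lemma hasDerivAt_clog_pow {y : ℝ} (hy : 0 < y) (i : ℕ) :
    HasDerivAt (fun t : ℝ => ((Real.log t : ℂ)) ^ i)
      ((i : ℂ) * (Real.log y : ℂ) ^ (i - 1) * ((y : ℂ))⁻¹) y := by
  have h : HasDerivAt (fun t : ℝ => (Real.log t : ℂ)) ((y⁻¹ : ℝ) : ℂ) y :=
    HasDerivAt.ofReal_comp (Real.hasDerivAt_log hy.ne')
  have h2 := (hasDerivAt_pow i ((Real.log y : ℂ))).comp y h
  have e : ((i : ℂ) * (Real.log y : ℂ) ^ (i - 1) * ((y : ℂ))⁻¹)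
      = (i : ℂ) * (Real.log y : ℂ) ^ (i - 1) * ((y⁻¹ : ℝ) : ℂ) := by push_cast; ring
  rw [e]; exact h2

lemma tendsto_rpow_mul_log_pow_zero {p : ℝ} (hp : p < 0) (n : ℕ) :
    Tendsto (fun y : ℝ => y ^ p * Real.log y ^ n) atTop (nhds 0) := by
  have h := (isLittleO_log_rpow_rpow_atTop (n : ℝ) (neg_pos.2 hp)).tendsto_div_nhds_zero
  apply h.congr'
  filter_upwards [eventually_ge_atTop (1 : ℝ)] with y hy
  have hy0 : (0 : ℝ) < y := lt_of_lt_of_le one_pos hy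
  rw [Real.rpow_natCast, Real.rpow_neg hy0.le, div_eq_mul_inv, inv_inv]
  ring

lemma tendsto_cpow_mul_clog_pow_zero {w : ℂ} (hw : w.re < 0) (n : ℕ) :
    Tendsto (fun y : ℝ => (y : ℂ) ^ w * (Real.log y : ℂ) ^ n) atTop (nhds 0) := by
  refine squeeze_zero_norm' (a := fun y : ℝ => y ^ w.re * Real.log y ^ n) ?_ (tendsto_rpow_mul_log_pow_zero hw n)
  filter_upwards [eventually_ge_atTop (1 : ℝ)] with y hy
  have hy0 : (0 : ℝ) < y := lt_of_lt_of_le one_pos hy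
  have hl : (0 : ℝ) ≤ Real.log y := Real.log_nonneg hy
  rw [norm_mul, norm_pow, Complex.norm_cpow_eq_rpow_re_of_pos hy0, Complex.norm_of_nonneg hl]

lemma contOn_cpow_mul_clog_pow (w : ℂ) (n : ℕ) :
    ContinuousOn (fun y : ℝ => (y : ℂ) ^ w * (Real.log y : ℂ) ^ n) (Set.Ioi (0:ℝ)) := by
  intro y hy
  have hy0 : (0 : ℝ) < y := hy
  apply ContinuousAt.continuousWithinAt
  apply ContinuousAt.mul
  · exact (continuousAt_cpow_const (Complex.ofReal_mem_slitPlane.2 hy0)).comp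
      Complex.continuous_ofReal.continuousAt
  · exact (Complex.continuous_ofReal.continuousAt.comp
      (Real.continuousAt_log hy0.ne')).pow n

lemma telescope_sum (μ : ℕ) {v L P : ℂ} (hv : v ≠ 0) :
    ∑ i ∈ Finset.range (μ + 1),
      ((-1 : ℂ) ^ (μ - i) * ((μ.factorial : ℂ) / (i.factorial : ℂ)) / v ^ (μ + 1 - i)) *
        (v * P * L ^ i + P * ((i : ℂ) * L ^ (i - 1))) = P * L ^ μ := by
  set f : ℕ → ℂ := fun j => match j with
    | 0 => 0
    | Nat.succ j => (-1 : ℂ) ^ (μ - j) * ((μ.factorial : ℂ) / (j.factorial : ℂ)) / v ^ (μ - j)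
        * L ^ j * P with hf
  have hsum : ∑ i ∈ Finset.range (μ + 1),
      ((-1 : ℂ) ^ (μ - i) * ((μ.factorial : ℂ) / (i.factorial : ℂ)) / v ^ (μ + 1 - i)) *
        (v * P * L ^ i + P * ((i : ℂ) * L ^ (i - 1)))
      = ∑ i ∈ Finset.range (μ + 1), (f (i + 1) - f i) := by
    apply Finset.sum_congr rfl
    intro i hi
    have hiμ : i ≤ μ := by simpa [Nat.lt_succ_iff] using Finset.mem_range.1 hi
    match i with
    | 0 =>
      have h1 : μ + 1 - 0 = (μ - 0) + 1 := by omega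
      simp only [hf]
      rw [h1]
      have hvp : v ^ (μ - 0) ≠ 0 := pow_ne_zero _ hv
      field_simp
      ring
    | Nat.succ j =>
      have hj : j + 1 ≤ μ := hiμ
      have h1 : μ - j = (μ - (j + 1)) + 1 := by omega
      have h2 : μ + 1 - (j + 1) = (μ - (j + 1)) + 1 := by omega
      simp only [hf]
      rw [h1, h2]
      have hfac : ((j.factorial : ℂ)) ≠ 0 := Nat.cast_ne_zero.2 j.factorial_ne_zero
      have hfac2 : (((j+1).factorial : ℂ)) ≠ 0 := Nat.cast_ne_zero.2 (j+1).factorial_ne_zero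
      have hvp : v ^ (μ - (j+1)) ≠ 0 := pow_ne_zero _ hv
      rw [Nat.factorial_succ]
      push_cast
      have hj1 : ((j : ℂ) + 1) ≠ 0 := by
        have := Nat.cast_add_one_ne_zero (R := ℂ) j
        exact_mod_cast this
      field_simp
      ring
  rw [hsum, Finset.sum_range_sub f]
  have : f (μ + 1) = P * L ^ μ := by
    simp only [hf, Nat.sub_self, pow_zero]
    rw [div_self (Nat.cast_ne_zero.2 μ.factorial_ne_zero : (μ.factorial : ℂ) ≠ 0)]
    ring
  rw [this]
  simp [hf]

lemma key_integral (μ : ℕ) {A : ℝ} (hA : 1 ≤ A) {w : ℂ} (hw : w.re < -1) :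
    IntegrableOn (fun y : ℝ => (y : ℂ) ^ w * (Real.log y : ℂ) ^ μ) (Set.Ioi A) ∧
    ∫ y in Set.Ioi A, (y : ℂ) ^ w * (Real.log y : ℂ) ^ μ =
      -∑ i ∈ Finset.range (μ + 1),
        ((-1 : ℂ) ^ (μ - i) * ((μ.factorial : ℂ) / (i.factorial : ℂ)) / (w + 1) ^ (μ + 1 - i)) *
          ((A : ℂ) ^ (w + 1) * (Real.log A : ℂ) ^ i) := by
  have hA0 : (0 : ℝ) < A := lt_of_lt_of_le one_pos hA
  have hv : w + 1 ≠ 0 := by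
    intro h
    have : (w + 1).re = 0 := by rw [h]; simp
    simp only [Complex.add_re, Complex.one_re] at this
    linarith
  -- Integrability
  have hcont : ContinuousOn (fun y : ℝ => (y : ℂ) ^ w * (Real.log y : ℂ) ^ μ) (Set.Ioi (0:ℝ)) :=
    contOn_cpow_mul_clog_pow w μ
  have hint : IntegrableOn (fun y : ℝ => (y : ℂ) ^ w * (Real.log y : ℂ) ^ μ) (Set.Ioi A) := by
    set r : ℝ := (w.re - 1) / 2 with hr
    have hr1 : w.re - r < 0 := by rw [hr]; linarith
    have hr2 : r < -1 := by rw [hr]; linarith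
    have h0 := tendsto_rpow_mul_log_pow_zero hr1 μ
    have hev : ∀ᶠ y : ℝ in atTop, y ^ (w.re - r) * Real.log y ^ μ < 1 :=
      h0.eventually (gt_mem_nhds one_pos)
    rw [eventually_atTop] at hev
    obtain ⟨B₀, hB₀⟩ := hev
    set B : ℝ := max B₀ A with hBdef
    have hAB : A ≤ B := le_max_right _ _
    have hB0 : (0 : ℝ) < B := lt_of_lt_of_le hA0 hAB
    have int1 : IntegrableOn (fun y : ℝ => (y : ℂ) ^ w * (Real.log y : ℂ) ^ μ) (Set.Ioc A B) := by
      have : IntegrableOn (fun y : ℝ => (y : ℂ) ^ w * (Real.log y : ℂ) ^ μ) (Set.Icc A B) := by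
        apply ContinuousOn.integrableOn_Icc
        apply hcont.mono
        intro y hy
        exact lt_of_lt_of_le hA0 hy.1
      exact this.mono_set Set.Ioc_subset_Icc_self
    have int2 : IntegrableOn (fun y : ℝ => (y : ℂ) ^ w * (Real.log y : ℂ) ^ μ) (Set.Ioi B) := by
      have hmeas : AEStronglyMeasurable (fun y : ℝ => (y : ℂ) ^ w * (Real.log y : ℂ) ^ μ)
          (volume.restrict (Set.Ioi B)) := by
        apply (hcont.mono _).aestronglyMeasurable measurableSet_Ioi
        exact fun y hy => lt_trans hB0 hy
      refine Integrable.mono' (integrableOn_Ioi_rpow_of_lt hr2 hB0) hmeas ?_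
      filter_upwards [ae_restrict_mem measurableSet_Ioi] with y hy
      have hyB : B < y := hy
      have hy0 : (0 : ℝ) < y := lt_trans hB0 hyB
      have hy1 : (1 : ℝ) ≤ y := le_trans (le_trans hA hAB) hyB.le
      have hnorm : ‖(y : ℂ) ^ w * (Real.log y : ℂ) ^ μ‖ = y ^ w.re * Real.log y ^ μ := by
        rw [norm_mul, norm_pow, Complex.norm_cpow_eq_rpow_re_of_pos hy0,
          Complex.norm_of_nonneg (Real.log_nonneg hy1)]
      rw [hnorm]
      have hsplit : y ^ w.re = y ^ r * (y ^ (w.re - r)) := by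
        rw [← Real.rpow_add hy0]; ring_nf
      rw [hsplit]
      have hb := (hB₀ y (le_trans (le_max_left _ _) hyB.le)).le
      calc y ^ r * y ^ (w.re - r) * Real.log y ^ μ
          = y ^ r * (y ^ (w.re - r) * Real.log y ^ μ) := by ring
        _ ≤ y ^ r * 1 := by
            apply mul_le_mul_of_nonneg_left hb (Real.rpow_nonneg hy0.le r)
        _ = y ^ r := mul_one _
    have : Set.Ioi A ⊆ Set.Ioc A B ∪ Set.Ioi B := by
      intro y hy
      rcases le_or_gt y B with h | h
      · exact Or.inl ⟨hy, h⟩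
      · exact Or.inr h
    exact (int1.union int2).mono_set this
  refine ⟨hint, ?_⟩
  -- the antiderivative
  set F : ℝ → ℂ := fun y => ∑ i ∈ Finset.range (μ + 1),
      ((-1 : ℂ) ^ (μ - i) * ((μ.factorial : ℂ) / (i.factorial : ℂ)) / (w + 1) ^ (μ + 1 - i)) *
        ((y : ℂ) ^ (w + 1) * (Real.log y : ℂ) ^ i) with hF
  have hderiv : ∀ y ∈ Set.Ici A, HasDerivAt F ((y : ℂ) ^ w * (Real.log y : ℂ) ^ μ) y := by
    intro y hy
    have hy0 : (0 : ℝ) < y := lt_of_lt_of_le hA0 hy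
    have hyne : (y : ℂ) ≠ 0 := by exact_mod_cast hy0.ne'
    have hterm : ∀ i ∈ Finset.range (μ + 1), HasDerivAt
        (fun t : ℝ => ((-1 : ℂ) ^ (μ - i) * ((μ.factorial : ℂ) / (i.factorial : ℂ)) /
            (w + 1) ^ (μ + 1 - i)) * ((t : ℂ) ^ (w + 1) * (Real.log t : ℂ) ^ i))
        (((-1 : ℂ) ^ (μ - i) * ((μ.factorial : ℂ) / (i.factorial : ℂ)) / (w + 1) ^ (μ + 1 - i)) *
          ((w + 1) * (y : ℂ) ^ w * (Real.log y : ℂ) ^ i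
            + (y : ℂ) ^ (w + 1) * ((i : ℂ) * (Real.log y : ℂ) ^ (i - 1) * ((y : ℂ))⁻¹))) y := by
      intro i _
      have h1 := (hasDerivAt_creal_cpow hy0 (w + 1)).mul (hasDerivAt_clog_pow hy0 i)
      simp only [add_sub_cancel_right] at h1
      exact h1.const_mul _
    have hS := HasDerivAt.fun_sum hterm
    have halg : ∑ i ∈ Finset.range (μ + 1),
        (((-1 : ℂ) ^ (μ - i) * ((μ.factorial : ℂ) / (i.factorial : ℂ)) / (w + 1) ^ (μ + 1 - i)) *
          ((w + 1) * (y : ℂ) ^ w * (Real.log y : ℂ) ^ i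
            + (y : ℂ) ^ (w + 1) * ((i : ℂ) * (Real.log y : ℂ) ^ (i - 1) * ((y : ℂ))⁻¹)))
        = (y : ℂ) ^ w * (Real.log y : ℂ) ^ μ := by
      have hcp : (y : ℂ) ^ (w + 1) = (y : ℂ) ^ w * (y : ℂ) := by
        rw [Complex.cpow_add _ _ hyne, Complex.cpow_one]
      have := telescope_sum μ (v := w + 1) (L := (Real.log y : ℂ)) (P := (y : ℂ) ^ w) hv
      rw [← this]
      apply Finset.sum_congr rfl
      intro i _
      congr 1
      rw [hcp]
      field_simp
    rw [← halg]
    exact hS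
  have htends : Tendsto F atTop (nhds 0) := by
    have : ∀ i ∈ Finset.range (μ + 1), Tendsto (fun y : ℝ =>
        ((-1 : ℂ) ^ (μ - i) * ((μ.factorial : ℂ) / (i.factorial : ℂ)) / (w + 1) ^ (μ + 1 - i)) *
          ((y : ℂ) ^ (w + 1) * (Real.log y : ℂ) ^ i)) atTop (nhds 0) := by
      intro i _
      have hre : (w + 1).re < 0 := by
        simp only [Complex.add_re, Complex.one_re]; linarith
      simpa using (tendsto_cpow_mul_clog_pow_zero hre i).const_mul
        ((-1 : ℂ) ^ (μ - i) * ((μ.factorial : ℂ) / (i.factorial : ℂ)) / (w + 1) ^ (μ + 1 - i))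
    have := tendsto_finset_sum (Finset.range (μ + 1)) this
    simpa using this
  have := integral_Ioi_of_hasDerivAt_of_tendsto' hderiv hint htends
  rw [this]
  simp [hF]

lemma sum_aux (c' : ℂ) (m : ℕ) (g : ℕ → ℂ) (C : ℕ → ℝ) (hC : Summable C)
    (hbg : ∀ k, ‖g k‖ ≤ C k) : Summable fun k : ℕ => g k / (c' - k) ^ m := by
  apply Summable.of_norm_bounded_eventually hC
  rw [Nat.cofinite_eq_atTop]
  filter_upwards [eventually_ge_atTop (⌈‖c'‖⌉₊ + 1)] with k hk
  have hk1 : ‖c'‖ + 1 ≤ (k : ℝ) := by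
    have h1 := Nat.le_ceil ‖c'‖
    have h2 : (⌈‖c'‖⌉₊ : ℝ) + 1 ≤ (k : ℝ) := by exact_mod_cast hk
    linarith
  have hnorm1 : (1 : ℝ) ≤ ‖c' - (k : ℂ)‖ := by
    have h3 : ‖(k : ℂ)‖ - ‖c'‖ ≤ ‖(k : ℂ) - c'‖ := norm_sub_norm_le _ _
    have h4 : ‖(k : ℂ)‖ = (k : ℝ) := by
      simp [Complex.norm_natCast]
    rw [norm_sub_rev] at h3
    linarith
  have hpow : (1 : ℝ) ≤ ‖(c' - (k : ℂ)) ^ m‖ := by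
    rw [norm_pow]; exact one_le_pow₀ hnorm1
  rw [norm_div]
  calc ‖g k‖ / ‖(c' - (k:ℂ)) ^ m‖ ≤ ‖g k‖ / 1 :=
        div_le_div_of_nonneg_left (by positivity) (by linarith) hpow |>.trans (le_of_eq rfl)
    _ = ‖g k‖ := div_one _
    _ ≤ C k := hbg k


/-- termwise integration of a normally summable prepared generator on an
unbounded cell, in the everywhere-integrable case `Re(ℓs+η)+d < 0`. -/
theorem stmt10 {X : Type*} (l η : ℂ) (d : ℕ) (hd : 1 ≤ d) (μ : ℕ)
    (a : X → ℝ) (ha : ∀ x, 1 ≤ a x) (ξ : ℕ → X → ℂ)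
    (C : ℕ → ℝ) (hC : Summable C) (hb : ∀ k x, ‖ξ k x‖ ≤ C k)
    (s : ℂ) (h1 : (l * s + η).re + d < 0) (h2 : ∀ k : ℕ, l * s + η + d - k ≠ 0) (x : X) :
    IntegrableOn
      (fun y : ℝ => (y : ℂ) ^ ((l * s + η) / d) * ((Real.log y : ℂ)) ^ μ *
        ∑' k : ℕ, ξ k x * (((a x / y : ℝ)) : ℂ) ^ ((k : ℂ) / d)) (Set.Ioi (a x)) ∧
    (∫ y in Set.Ioi (a x), (y : ℂ) ^ ((l * s + η) / d) * ((Real.log y : ℂ)) ^ μ *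
        ∑' k : ℕ, ξ k x * (((a x / y : ℝ)) : ℂ) ^ ((k : ℂ) / d))
      = -((a x : ℂ) ^ ((l * s + η + d) / d)) * ∑ i ∈ Finset.range (μ + 1),
          ((-1 : ℂ) ^ (μ - i) * ((μ.factorial : ℂ) / (i.factorial : ℂ)) * (d : ℂ) ^ (μ + 1 - i)) *
            ((Real.log (a x) : ℂ)) ^ i *
            ∑' k : ℕ, ξ k x / (l * s + η + d - k) ^ (μ + 1 - i) := by
  set A : ℝ := a x with hAdef
  have hA : 1 ≤ A := ha x
  have hA0 : (0 : ℝ) < A := lt_of_lt_of_le one_pos hA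
  have hAC : (A : ℂ) ≠ 0 := by exact_mod_cast hA0.ne'
  set cc : ℂ := l * s + η with hccdef
  have hdpos : (0 : ℝ) < (d : ℝ) := by exact_mod_cast Nat.lt_of_lt_of_le Nat.zero_lt_one hd
  have hdC : ((d : ℕ) : ℂ) ≠ 0 := by exact_mod_cast hdpos.ne'
  have hdR : ((d : ℕ) : ℂ) = (((d : ℕ) : ℝ) : ℂ) := by norm_cast
  have hre : ∀ z : ℂ, (z / ((d : ℕ) : ℂ)).re = z.re / ((d : ℕ) : ℝ) := by
    intro z; rw [hdR, Complex.div_ofReal_re]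
  have hccre : cc.re < -(d : ℝ) := by linarith
  have hCnn : ∀ k, 0 ≤ C k := fun k => le_trans (norm_nonneg _) (hb k x)
  -- the exponents
  set w : ℕ → ℂ := fun k => (cc - k) / ((d : ℕ) : ℂ) with hwdef
  have hwre : ∀ k : ℕ, (w k).re < -1 := by
    intro k
    rw [hwdef]
    simp only [hre, Complex.sub_re, Complex.natCast_re]
    rw [div_lt_iff₀ hdpos]
    have : (0:ℝ) ≤ (k:ℝ) := Nat.cast_nonneg k
    linarith
  have hccd : (cc / ((d:ℕ):ℂ)).re < -1 := by
    rw [hre, div_lt_iff₀ hdpos]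
    linarith
  have hwv : ∀ k : ℕ, w k + 1 = (cc + d - k) / ((d : ℕ) : ℂ) := by
    intro k; rw [hwdef]; field_simp; ring
  -- base objects
  set G0 : ℝ → ℂ := fun y => (y : ℂ) ^ (cc / ((d:ℕ):ℂ)) * (Real.log y : ℂ) ^ μ with hG0def
  have hG0 := key_integral μ hA hccd
  set f : ℕ → ℝ → ℂ := fun k y =>
    (ξ k x * (A : ℂ) ^ ((k : ℂ) / ((d:ℕ):ℂ))) * ((y : ℂ) ^ (w k) * (Real.log y : ℂ) ^ μ)
    with hfdef
  have hint : ∀ k, IntegrableOn (f k) (Set.Ioi A) := by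
    intro k
    exact ((key_integral μ hA (hwre k)).1).const_mul _
  -- pointwise splitting
  have hsplit : ∀ k : ℕ, ∀ y : ℝ, y ∈ Set.Ioi A →
      f k y = G0 y * (ξ k x * (((A / y : ℝ)) : ℂ) ^ ((k : ℂ) / ((d:ℕ):ℂ))) := by
    intro k y hy
    have hy0 : (0 : ℝ) < y := lt_trans hA0 hy
    have hyC : (y : ℂ) ≠ 0 := by exact_mod_cast hy0.ne'
    have harg : ((y : ℂ)).arg ≠ Real.pi := by
      rw [Complex.arg_ofReal_of_nonneg hy0.le]
      exact fun h => Real.pi_ne_zero h.symm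
    have hz : (((A / y : ℝ)) : ℂ) ^ ((k : ℂ) / ((d:ℕ):ℂ))
        = (A : ℂ) ^ ((k : ℂ) / ((d:ℕ):ℂ)) * ((y : ℂ) ^ ((k : ℂ) / ((d:ℕ):ℂ)))⁻¹ := by
      have e1 : ((A / y : ℝ) : ℂ) = ((A : ℝ) : ℂ) * (((y⁻¹ : ℝ)) : ℂ) := by
        rw [div_eq_mul_inv, Complex.ofReal_mul]
      rw [e1]
      rw [Complex.mul_cpow_ofReal_nonneg hA0.le (inv_nonneg.2 hy0.le)]
      congr 1
      rw [Complex.ofReal_inv, Complex.inv_cpow _ _ harg]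
    have hypow : (y : ℂ) ^ (w k)
        = (y : ℂ) ^ (cc / ((d:ℕ):ℂ)) * ((y : ℂ) ^ ((k : ℂ) / ((d:ℕ):ℂ)))⁻¹ := by
      rw [hwdef]
      simp only [sub_div]
      rw [Complex.cpow_sub _ _ hyC, div_eq_mul_inv]
    rw [hfdef, hz, hG0def]
    simp only
    rw [hypow]
    ring
  have hEq : Set.EqOn
      (fun y : ℝ => (y : ℂ) ^ ((l * s + η) / d) * ((Real.log y : ℂ)) ^ μ *
        ∑' k : ℕ, ξ k x * (((a x / y : ℝ)) : ℂ) ^ ((k : ℂ) / d))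
      (fun y : ℝ => ∑' k : ℕ, f k y) (Set.Ioi A) := by
    intro y hy
    simp only
    have : ∑' k : ℕ, f k y
        = ∑' k : ℕ, G0 y * (ξ k x * (((A / y : ℝ)) : ℂ) ^ ((k : ℂ) / ((d:ℕ):ℂ))) := by
      apply tsum_congr; intro k; exact hsplit k y hy
    rw [this, tsum_mul_left]
  -- norm bound on the series terms
  have hterm_bound : ∀ y ∈ Set.Ioi A, ∀ k : ℕ,
      ‖ξ k x * (((A / y : ℝ)) : ℂ) ^ ((k : ℂ) / ((d:ℕ):ℂ))‖ ≤ C k := by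
    intro y hy k
    have hy0 : (0 : ℝ) < y := lt_trans hA0 hy
    have hq : (0 : ℝ) < A / y := div_pos hA0 hy0
    have hq1 : A / y ≤ 1 := (div_le_one hy0).2 (le_of_lt hy)
    have hz : (((k : ℂ) / ((d:ℕ):ℂ))).re = (k : ℝ) / (d : ℝ) := by
      rw [hre]; simp
    rw [norm_mul, Complex.norm_cpow_eq_rpow_re_of_pos hq, hz]
    have hle1 : (A / y) ^ ((k : ℝ) / (d : ℝ)) ≤ 1 :=
      Real.rpow_le_one hq.le hq1 (by positivity)
    calc ‖ξ k x‖ * (A / y) ^ ((k : ℝ) / (d : ℝ)) ≤ ‖ξ k x‖ * 1 :=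
          mul_le_mul_of_nonneg_left hle1 (norm_nonneg _)
      _ = ‖ξ k x‖ := mul_one _
      _ ≤ C k := hb k x
  have hsummable_norm : ∀ y ∈ Set.Ioi A,
      Summable fun k : ℕ => ‖ξ k x * (((A / y : ℝ)) : ℂ) ^ ((k : ℂ) / ((d:ℕ):ℂ))‖ := by
    intro y hy
    exact Summable.of_nonneg_of_le (fun k => norm_nonneg _) (hterm_bound y hy) hC
  -- continuity, hence measurability
  have hcontOn : ContinuousOn
      (fun y : ℝ => (y : ℂ) ^ ((l * s + η) / d) * ((Real.log y : ℂ)) ^ μ *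
        ∑' k : ℕ, ξ k x * (((a x / y : ℝ)) : ℂ) ^ ((k : ℂ) / d)) (Set.Ioi A) := by
    apply ContinuousOn.mul
    · exact (contOn_cpow_mul_clog_pow _ μ).mono (fun y hy => lt_trans hA0 hy)
    · apply continuousOn_tsum (u := C) _ hC
      · intro k y hy
        exact hterm_bound y hy k
      · intro k
        apply ContinuousOn.mul continuousOn_const
        intro y hy
        have hy0 : (0 : ℝ) < y := lt_trans hA0 hy
        apply ContinuousAt.continuousWithinAt
        have hbase : ContinuousAt (fun y : ℝ => (((a x / y : ℝ)) : ℂ)) y :=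
          Complex.continuous_ofReal.continuousAt.comp
            (continuousAt_const.div continuousAt_id hy0.ne')
        have houter : ContinuousAt (fun z : ℂ => z ^ ((k : ℂ) / ((d:ℕ):ℂ)))
            (((a x / y : ℝ)) : ℂ) :=
          continuousAt_cpow_const (Complex.ofReal_mem_slitPlane.2 (div_pos hA0 hy0))
        exact ContinuousAt.comp (x := y) (f := fun t : ℝ => ((a x / t : ℝ) : ℂ)) houter hbase
  -- integrability of the full integrand
  have hintegrable : IntegrableOn
      (fun y : ℝ => (y : ℂ) ^ ((l * s + η) / d) * ((Real.log y : ℂ)) ^ μ *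
        ∑' k : ℕ, ξ k x * (((a x / y : ℝ)) : ℂ) ^ ((k : ℂ) / d)) (Set.Ioi A) := by
    apply Integrable.mono' ((hG0.1.norm).const_mul (∑' k, C k))
      (hcontOn.aestronglyMeasurable measurableSet_Ioi)
    filter_upwards [ae_restrict_mem measurableSet_Ioi] with y hy
    have h5 : ‖∑' k : ℕ, ξ k x * (((A / y : ℝ)) : ℂ) ^ ((k : ℂ) / ((d:ℕ):ℂ))‖ ≤ ∑' k, C k := by
      calc ‖∑' k : ℕ, ξ k x * (((A / y : ℝ)) : ℂ) ^ ((k : ℂ) / ((d:ℕ):ℂ))‖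
          ≤ ∑' k, ‖ξ k x * (((A / y : ℝ)) : ℂ) ^ ((k : ℂ) / ((d:ℕ):ℂ))‖ :=
            norm_tsum_le_tsum_norm (hsummable_norm y hy)
        _ ≤ ∑' k, C k := Summable.tsum_le_tsum (hterm_bound y hy) (hsummable_norm y hy) hC
    rw [norm_mul]
    calc ‖(y : ℂ) ^ ((l * s + η) / d) * ((Real.log y : ℂ)) ^ μ‖ *
          ‖∑' k : ℕ, ξ k x * (((a x / y : ℝ)) : ℂ) ^ ((k : ℂ) / d)‖
        ≤ ‖(y : ℂ) ^ ((l * s + η) / d) * ((Real.log y : ℂ)) ^ μ‖ * ∑' k, C k := by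
          apply mul_le_mul_of_nonneg_left _ (norm_nonneg _)
          exact h5
      _ = (∑' k, C k) * ‖G0 y‖ := by rw [mul_comm]
  refine ⟨hintegrable, ?_⟩
  -- summability of integral norms
  set I0 : ℝ := ∫ y in Set.Ioi A, ‖G0 y‖ with hI0def
  have hsumnorm : Summable fun k : ℕ => ∫ y in Set.Ioi A, ‖f k y‖ := by
    apply Summable.of_nonneg_of_le
      (fun k => integral_nonneg (fun y => norm_nonneg _))
      (fun k => ?_) (hC.mul_right I0)
    have hle : ∀ y ∈ Set.Ioi A, ‖f k y‖ ≤ C k * ‖G0 y‖ := by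
      intro y hy
      rw [hsplit k y hy, norm_mul]
      calc ‖G0 y‖ * ‖ξ k x * (((A / y : ℝ)) : ℂ) ^ ((k : ℂ) / ((d:ℕ):ℂ))‖
          ≤ ‖G0 y‖ * C k := mul_le_mul_of_nonneg_left (hterm_bound y hy k) (norm_nonneg _)
        _ = C k * ‖G0 y‖ := mul_comm _ _
    calc (∫ y in Set.Ioi A, ‖f k y‖) ≤ ∫ y in Set.Ioi A, C k * ‖G0 y‖ :=
          setIntegral_mono_on ((hint k).norm) ((hG0.1.norm).const_mul (C k))
            measurableSet_Ioi hle
      _ = C k * I0 := by rw [integral_const_mul]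
  -- the integral identity
  have step1 : (∫ y in Set.Ioi A, (y : ℂ) ^ ((l * s + η) / d) * ((Real.log y : ℂ)) ^ μ *
        ∑' k : ℕ, ξ k x * (((a x / y : ℝ)) : ℂ) ^ ((k : ℂ) / d))
      = ∑' k : ℕ, ∫ y in Set.Ioi A, f k y := by
    rw [setIntegral_congr_fun measurableSet_Ioi hEq]
    exact (integral_tsum_of_summable_integral_norm hint hsumnorm).symm
  rw [step1]
  -- evaluate each term
  set LA : ℂ := (Real.log A : ℂ) with hLAdef
  set Apow : ℂ := (A : ℂ) ^ ((cc + (d:ℕ)) / ((d:ℕ):ℂ)) with hApowdef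
  have hterm_int : ∀ k : ℕ, (∫ y in Set.Ioi A, f k y)
      = ∑ i ∈ Finset.range (μ + 1), (-Apow) *
          ((((-1 : ℂ) ^ (μ - i) * ((μ.factorial : ℂ) / (i.factorial : ℂ)) *
            ((d:ℕ) : ℂ) ^ (μ + 1 - i)) * LA ^ i) *
            (ξ k x / (cc + (d:ℕ) - k) ^ (μ + 1 - i))) := by
    intro k
    rw [hfdef]
    simp only
    rw [integral_const_mul, (key_integral μ hA (hwre k)).2, mul_neg, Finset.mul_sum,
      ← Finset.sum_neg_distrib]
    apply Finset.sum_congr rfl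
    intro i hi
    have hq : cc + (d:ℕ) - (k:ℂ) ≠ 0 := h2 k
    have hqm : (cc + (d:ℕ) - (k:ℂ)) ^ (μ + 1 - i) ≠ 0 := pow_ne_zero _ hq
    have hdm : (((d:ℕ):ℂ)) ^ (μ + 1 - i) ≠ 0 := pow_ne_zero _ hdC
    have hApow_split : Apow = (A : ℂ) ^ ((k : ℂ) / ((d:ℕ):ℂ)) * (A : ℂ) ^ (w k + 1) := by
      rw [hApowdef, ← Complex.cpow_add _ _ hAC]
      congr 1
      rw [hwv]
      field_simp
      ring
    have hwkpow : (w k + 1) ^ (μ + 1 - i)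
        = (cc + (d:ℕ) - k) ^ (μ + 1 - i) / (((d:ℕ):ℂ)) ^ (μ + 1 - i) := by
      rw [hwv, div_pow]
    rw [hApow_split, hwkpow]
    field_simp
    try ring
  rw [tsum_congr hterm_int]
  -- swap the sums
  have hbase_summable : ∀ i : ℕ, Summable fun k : ℕ => ξ k x / (cc + (d:ℕ) - k) ^ (μ + 1 - i) := by
    intro i
    have := sum_aux (cc + (d:ℕ)) (μ + 1 - i) (fun k => ξ k x) C hC (fun k => hb k x)
    simpa using this
  have hsummand_summable : ∀ i ∈ Finset.range (μ + 1), Summable fun k : ℕ => (-Apow) *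
      ((((-1 : ℂ) ^ (μ - i) * ((μ.factorial : ℂ) / (i.factorial : ℂ)) *
        ((d:ℕ) : ℂ) ^ (μ + 1 - i)) * LA ^ i) *
        (ξ k x / (cc + (d:ℕ) - k) ^ (μ + 1 - i))) := by
    intro i _
    exact (((hbase_summable i).mul_left _).mul_left _)
  rw [Summable.tsum_finsetSum hsummand_summable]
  have hfinal : ∀ i ∈ Finset.range (μ + 1), (∑' k : ℕ, (-Apow) *
      ((((-1 : ℂ) ^ (μ - i) * ((μ.factorial : ℂ) / (i.factorial : ℂ)) *
        ((d:ℕ) : ℂ) ^ (μ + 1 - i)) * LA ^ i) *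
        (ξ k x / (cc + (d:ℕ) - k) ^ (μ + 1 - i))))
      = (-Apow) * ((((-1 : ℂ) ^ (μ - i) * ((μ.factorial : ℂ) / (i.factorial : ℂ)) *
        ((d:ℕ) : ℂ) ^ (μ + 1 - i)) * LA ^ i) *
        ∑' k : ℕ, ξ k x / (cc + (d:ℕ) - k) ^ (μ + 1 - i)) := by
    intro i _
    rw [tsum_mul_left, tsum_mul_left]
  rw [Finset.sum_congr rfl hfinal, ← Finset.mul_sum]
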